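/- For every λ ∈ (0,1), the (continuously extended) Tichy–Uitz function g_λ : [0,1] → [0,1] is differentiable almost everywhere with respect to Lebesgue measure, and g_λ′(x) = 0 for almost every x ∈ [0,1]; i.e. g_λ is a singular function. -/

import Mathlib

open Set Filter

/-- The mediant of two rationals (written in lowest terms). -/
def mediant (x y : ℚ) : ℚ :=
  ((x.num + y.num : ℤ) : ℚ) / ((x.den + y.den : ℕ) : ℚ)

/-- `x` and `y` are consecutive elements of the set `S`. -/
def IsConsecutive (S : Set ℚ) (x y : ℚ) : Prop :=
  x ∈ S ∧ y ∈ S ∧ x < y ∧ ∀ z ∈ S, ¬ (x < z ∧ z < y)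

/-- The Stern–Brocot sequences `ℱ_n`. -/
def sternBrocot : ℕ → Set ℚ
  | 0 => {0, 1}
  | n + 1 => sternBrocot n ∪
      {z | ∃ x y : ℚ, IsConsecutive (sternBrocot n) x y ∧ z = mediant x y}

/-- `Q_n`, the set of mediants newly inserted at step `n ≥ 1` of the
Stern–Brocot construction. -/
def newMediants (n : ℕ) : Set ℚ :=
  {z | ∃ x y : ℚ, IsConsecutive (sternBrocot (n - 1)) x y ∧ z = mediant x y}

/-- Value of the regular continued fraction `[0; a_1, …, a_m]`. -/
def cfVal : List ℕ → ℚ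
  | [] => 0
  | a :: t => 1 / ((a : ℚ) + cfVal t)

/-- `a` is the regular continued fraction expansion `[0; a_1, …, a_m]` of `x`,
with all partial quotients positive and the last one at least `2`. -/
def IsCF (x : ℚ) (a : List ℕ) : Prop :=
  (∀ ai ∈ a, 1 ≤ ai) ∧ 2 ≤ a.getLastD 0 ∧ x = cfVal a

/-- Value of `b_1 - 1/(b_2 - ⋯ - 1/b_l)` (using the convention `1/0 = 0`,
so that `rrTail [b] = b`). -/
def rrTail : List ℕ → ℚ
  | [] => 0
  | b :: t => (b : ℚ) - 1 / rrTail t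

/-- Value of the regular reduced continued fraction
`[[1; b_1, …, b_l]] = 1 - 1/(b_1 - 1/(b_2 - ⋯ - 1/b_l))`. -/
def rrcfVal (b : List ℕ) : ℚ := 1 - 1 / rrTail b

/-- `b` is the regular reduced continued fraction expansion
`[[1; b_1, …, b_l]]` of `x`, with all entries at least `2`. -/
def IsRRCF (x : ℚ) (b : List ℕ) : Prop :=
  (∀ bi ∈ b, 2 ≤ bi) ∧ x = rrcfVal b

/-- `Θ_k`: rationals in `(0,1)` whose regular reduced continued fraction
expansion satisfies `L(x) = b_1 + ⋯ + b_l = k + 1`. -/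
def Theta (k : ℕ) : Set ℚ :=
  {x | x ∈ Set.Ioo (0 : ℚ) 1 ∧ ∃ b : List ℕ, IsRRCF x b ∧ b.sum = k + 1}

/-- `Ξ_n = {0, 1} ∪ Θ_1 ∪ ⋯ ∪ Θ_n`. -/
def Xi (n : ℕ) : Set ℚ :=
  {0, 1} ∪ ⋃ k ∈ Finset.Icc 1 n, Theta k

namespace TU

open Topology

lemma den_cast_pos (a : ℚ) : (0:ℚ) < (a.den : ℚ) := by exact_mod_cast a.pos

lemma rat_lt_iff {a b : ℚ} : a < b ↔ (a.num:ℚ) * (b.den:ℚ) < (b.num:ℚ) * (a.den:ℚ) := by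
  rw [show a = (a.num:ℚ)/(a.den:ℚ) from (Rat.num_div_den a).symm,
      show b = (b.num:ℚ)/(b.den:ℚ) from (Rat.num_div_den b).symm] 
  rw [div_lt_div_iff₀ (den_cast_pos a) (den_cast_pos b)]
  simp [Rat.num_div_den]

lemma num_eq (a : ℚ) : (a.num:ℚ) = a * (a.den:ℚ) :=
  (div_eq_iff (den_cast_pos a).ne').mp (Rat.num_div_den a)

lemma mediant_lt_right {a b : ℚ} (h : a < b) : mediant a b < b := by
  unfold mediant
  rw [div_lt_iff₀ (by positivity)]
  push_cast
  nlinarith [den_cast_pos a, den_cast_pos b, num_eq a, num_eq b,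
    mul_lt_mul_of_pos_right h (den_cast_pos a)]

lemma left_lt_mediant {a b : ℚ} (h : a < b) : a < mediant a b := by
  unfold mediant
  rw [lt_div_iff₀ (by positivity)]
  push_cast
  nlinarith [den_cast_pos a, den_cast_pos b, num_eq a, num_eq b,
    mul_lt_mul_of_pos_right h (den_cast_pos b)]

/-- adjacency in a list -/
inductive Adj : ℚ → ℚ → List ℚ → Prop
  | head (x y : ℚ) (t : List ℚ) : Adj x y (x :: y :: t)
  | cons (a : ℚ) {x y : ℚ} {l : List ℚ} : Adj x y l → Adj x y (a :: l)

lemma adj_nil {x y : ℚ} : ¬ Adj x y [] := by intro h; cases h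

lemma adj_singleton {x y a : ℚ} : ¬ Adj x y [a] := by
  intro h; cases h with
  | cons _ h => exact adj_nil h

lemma adj_cons_cons {x y a b : ℚ} {t : List ℚ} :
    Adj x y (a :: b :: t) ↔ (x = a ∧ y = b) ∨ Adj x y (b :: t) := by
  constructor
  · intro h; cases h with
    | head => exact Or.inl ⟨rfl, rfl⟩
    | cons _ h => exact Or.inr h
  · rintro (⟨rfl, rfl⟩ | h)
    · exact Adj.head _ _ _
    · exact Adj.cons _ h

lemma Adj.mem_left {x y : ℚ} {l : List ℚ} (h : Adj x y l) : x ∈ l := by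
  induction h with
  | head => simp
  | cons a _ ih => simp [ih]

lemma Adj.mem_right {x y : ℚ} {l : List ℚ} (h : Adj x y l) : y ∈ l := by
  induction h with
  | head => simp
  | cons a _ ih => simp [ih]

lemma chain'_rel {R : ℚ → ℚ → Prop} {l : List ℚ} (hc : List.Chain' R l)
    {x y : ℚ} (h : Adj x y l) : R x y := by
  induction h with
  | head => exact (List.isChain_cons_cons.mp hc).1
  | cons a _ ih => exact ih hc.tail

lemma chain'_of_adj {R : ℚ → ℚ → Prop} : ∀ {l : List ℚ},
    (∀ x y, Adj x y l → R x y) → List.Chain' R l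
  | [], _ => List.isChain_nil
  | [_], _ => List.isChain_singleton _
  | a :: b :: t, h => by
    rw [List.Chain', List.isChain_cons_cons]
    exact ⟨h a b (Adj.head _ _ _),
      chain'_of_adj (fun x y hxy => h x y (Adj.cons _ hxy))⟩


def ins : List ℚ → List ℚ
  | [] => []
  | [a] => [a]
  | a :: b :: t => a :: mediant a b :: ins (b :: t)

def SBL : ℕ → List ℚ
  | 0 => [0, 1]
  | n + 1 => ins (SBL n)

lemma ins_head : ∀ (b : ℚ) (t : List ℚ), (ins (b :: t)).head? = some b
  | _, [] => rfl
  | _, _ :: _ => rfl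

lemma mem_ins : ∀ {l : List ℚ} {z : ℚ},
    z ∈ ins l ↔ z ∈ l ∨ ∃ a b, Adj a b l ∧ z = mediant a b
  | [], z => by simp [ins, adj_nil]
  | [a], z => by simp [ins, adj_singleton]
  | a :: b :: t, z => by
    simp only [ins, List.mem_cons, mem_ins (l := b :: t), adj_cons_cons]
    constructor
    · rintro (rfl | rfl | h | ⟨a', b', h, rfl⟩)
      · exact Or.inl (Or.inl rfl)
      · exact Or.inr ⟨a, b, Or.inl ⟨rfl, rfl⟩, rfl⟩
      · exact Or.inl (Or.inr h)
      · exact Or.inr ⟨a', b', Or.inr h, rfl⟩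
    · rintro ((rfl | h) | ⟨a', b', (⟨rfl, rfl⟩ | h), rfl⟩)
      · exact Or.inl rfl
      · exact Or.inr (Or.inr (Or.inl h))
      · exact Or.inr (Or.inl rfl)
      · exact Or.inr (Or.inr (Or.inr ⟨a', b', h, rfl⟩))

lemma adj_ins : ∀ {l : List ℚ} {u v : ℚ},
    Adj u v (ins l) ↔ ∃ a b, Adj a b l ∧
      ((u = a ∧ v = mediant a b) ∨ (u = mediant a b ∧ v = b))
  | [], u, v => by simp [ins, adj_nil]
  | [a], u, v => by simp [ins, adj_singleton]
  | a :: b :: t, u, v => by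
    have hins : Adj u v (mediant a b :: ins (b :: t)) ↔
        (u = mediant a b ∧ v = b) ∨ Adj u v (ins (b :: t)) := by
      cases t with
      | nil => simp [ins, adj_cons_cons, adj_singleton]
      | cons c t' => simp [ins, adj_cons_cons]
    have key : Adj u v (ins (a :: b :: t)) ↔
        (u = a ∧ v = mediant a b) ∨ (u = mediant a b ∧ v = b) ∨
          Adj u v (ins (b :: t)) := by
      show Adj u v (a :: mediant a b :: ins (b :: t)) ↔ _
      rw [adj_cons_cons, hins]
    rw [key, adj_ins (l := b :: t)]
    constructor
    · rintro (⟨h1, h2⟩ | ⟨h1, h2⟩ | ⟨a', b', h, hc⟩)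
      · exact ⟨a, b, Adj.head _ _ _, Or.inl ⟨h1, h2⟩⟩
      · exact ⟨a, b, Adj.head _ _ _, Or.inr ⟨h1, h2⟩⟩
      · exact ⟨a', b', Adj.cons _ h, hc⟩
    · rintro ⟨a', b', h, hc⟩
      rw [adj_cons_cons] at h
      rcases h with ⟨rfl, rfl⟩ | h
      · tauto
      · exact Or.inr (Or.inr ⟨a', b', h, hc⟩)

lemma chain'_ins : ∀ {l : List ℚ}, List.Chain' (· < ·) l → List.Chain' (· < ·) (ins l)
  | [], _ => List.isChain_nil
  | [a], _ => List.isChain_singleton _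
  | a :: b :: t, h => by
    have hab : a < b := (List.isChain_cons_cons.mp h).1
    have ht := chain'_ins (l := b :: t) h.tail
    show List.Chain' _ (a :: mediant a b :: ins (b :: t))
    rw [List.Chain', List.isChain_cons_cons]
    refine ⟨left_lt_mediant hab, List.isChain_cons.mpr ⟨?_, ht⟩⟩
    intro y hy
    rw [ins_head] at hy
    cases hy
    exact mediant_lt_right hab


lemma adj_of_consec {l : List ℚ} (hs : List.Chain' (· < ·) l) {x y : ℚ}
    (hx : x ∈ l) (hy : y ∈ l) (hxy : x < y)
    (hb : ∀ z ∈ l, ¬ (x < z ∧ z < y)) : Adj x y l := by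
  induction l with
  | nil => cases hx
  | cons a t ih =>
    have hp := List.isChain_iff_pairwise.mp hs
    by_cases hxa : x = a
    · subst hxa
      have hyt : y ∈ t := by
        rcases List.mem_cons.mp hy with rfl | h
        · exact absurd hxy (lt_irrefl _)
        · exact h
      cases t with
      | nil => cases hyt
      | cons b t' =>
        by_cases hyb : y = b
        · subst hyb; exact Adj.head _ _ _
        · exfalso
          have hyt' : y ∈ t' := by
            rcases List.mem_cons.mp hyt with rfl | h
            · exact absurd rfl hyb
            · exact h
          have hxb : x < b := List.rel_of_pairwise_cons hp (by simp)
          have hby : b < y :=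
            List.rel_of_pairwise_cons (List.Pairwise.of_cons hp) hyt'
          exact hb b (by simp) ⟨hxb, hby⟩
    · have hxt : x ∈ t := by
        rcases List.mem_cons.mp hx with rfl | h
        · exact absurd rfl hxa
        · exact h
      have hyt : y ∈ t := by
        rcases List.mem_cons.mp hy with rfl | h
        · exact absurd (List.rel_of_pairwise_cons hp hxt) (by intro hax; exact absurd (hxy.trans hax) (lt_irrefl _))
        · exact h
      exact Adj.cons a (ih hs.tail hxt hyt (fun z hz => hb z (by simp [hz])))

lemma adj_no_between {l : List ℚ} (hp : List.Pairwise (· < ·) l) {x y : ℚ}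
    (h : Adj x y l) : ∀ z ∈ l, ¬ (x < z ∧ z < y) := by
  induction h with
  | head x y t =>
    rintro z hz ⟨h1, h2⟩
    rcases List.mem_cons.mp hz with rfl | hz
    · exact absurd h1 (lt_irrefl _)
    rcases List.mem_cons.mp hz with rfl | hz
    · exact absurd h2 (lt_irrefl _)
    · have : y < z := List.rel_of_pairwise_cons (List.Pairwise.of_cons hp) hz
      exact absurd (h2.trans this) (lt_irrefl _)
  | cons a h ih =>
    rintro z hz ⟨h1, h2⟩
    rcases List.mem_cons.mp hz with rfl | hz
    · exact absurd (h1.trans (List.rel_of_pairwise_cons hp h.mem_left)) (lt_irrefl _)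
    · exact ih (List.Pairwise.of_cons hp) z hz ⟨h1, h2⟩

lemma consec_iff_adj {l : List ℚ} (hs : List.Chain' (· < ·) l) (x y : ℚ) :
    IsConsecutive {z | z ∈ l} x y ↔ Adj x y l := by
  constructor
  · rintro ⟨hx, hy, hxy, hb⟩
    exact adj_of_consec hs hx hy hxy hb
  · intro h
    exact ⟨h.mem_left, h.mem_right, chain'_rel hs h,
      adj_no_between (List.isChain_iff_pairwise.mp hs) h⟩

lemma sb_inv : ∀ n, sternBrocot n = {z | z ∈ SBL n} ∧ List.Chain' (· < ·) (SBL n)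
  | 0 => by
    constructor
    · ext z
      show z ∈ ({0, 1} : Set ℚ) ↔ z ∈ ([0, 1] : List ℚ)
      simp [Set.mem_insert_iff]
    · show List.Chain' _ [(0:ℚ), 1]
      simp [List.Chain', List.isChain_cons_cons]
  | n + 1 => by
    obtain ⟨hs, hc⟩ := sb_inv n
    have hcon : ∀ x y : ℚ, IsConsecutive (sternBrocot n) x y ↔ Adj x y (SBL n) := by
      intro x y; rw [hs]; exact consec_iff_adj hc x y
    constructor
    · ext z
      show z ∈ sternBrocot n ∪ _ ↔ z ∈ ins (SBL n)
      rw [mem_ins]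
      simp only [Set.mem_union, Set.mem_setOf_eq, hcon]
      rw [hs]
      rfl
    · exact chain'_ins hc

lemma sb_set (n : ℕ) : sternBrocot n = {z | z ∈ SBL n} := (sb_inv n).1
lemma sb_chain (n : ℕ) : List.Chain' (· < ·) (SBL n) := (sb_inv n).2
lemma consec_iff (n : ℕ) (x y : ℚ) :
    IsConsecutive (sternBrocot n) x y ↔ Adj x y (SBL n) := by
  rw [sb_set]; exact consec_iff_adj (sb_chain n) x y


def Det1 (a b : ℚ) : Prop := b.num * (a.den : ℤ) - a.num * (b.den : ℤ) = 1

lemma adj_SBL_zero {x y : ℚ} (h : Adj x y (SBL 0)) : x = 0 ∧ y = 1 := by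
  have : Adj x y [(0:ℚ), 1] := h
  rw [adj_cons_cons] at this
  rcases this with ⟨rfl, rfl⟩ | h
  · exact ⟨rfl, rfl⟩
  · exact absurd h adj_singleton

lemma mediant_num_den {a b : ℚ} (h : Det1 a b) :
    (mediant a b).num = a.num + b.num ∧ ((mediant a b).den : ℤ) = (a.den : ℤ) + b.den := by
  have hq : (0:ℤ) < (a.den : ℤ) + b.den := by positivity
  have hcop : Nat.Coprime (a.num + b.num).natAbs ((a.den : ℤ) + b.den).natAbs := by
    exact Int.isCoprime_iff_gcd_eq_one.mp
      ⟨-(b.den : ℤ), b.num, by unfold Det1 at h; ring_nf; ring_nf at h; linarith⟩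
  have hm : mediant a b = (((a.num + b.num : ℤ)) : ℚ) / ((((a.den : ℤ) + b.den : ℤ)) : ℚ) := by
    unfold mediant; push_cast; ring_nf
  rw [hm]
  exact ⟨Rat.num_div_eq_of_coprime hq hcop, Rat.den_div_eq_of_coprime hq hcop⟩

lemma det1_left {a b : ℚ} (h : Det1 a b) : Det1 a (mediant a b) := by
  obtain ⟨h1, h2⟩ := mediant_num_den h
  unfold Det1 at *
  rw [h1, h2]; ring_nf; ring_nf at h; linarith

lemma det1_right {a b : ℚ} (h : Det1 a b) : Det1 (mediant a b) b := by
  obtain ⟨h1, h2⟩ := mediant_num_den h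
  unfold Det1 at *
  rw [h1, h2]; ring_nf; ring_nf at h; linarith

lemma det1_adj : ∀ n, ∀ {x y : ℚ}, Adj x y (SBL n) → Det1 x y
  | 0, x, y, h => by
    obtain ⟨rfl, rfl⟩ := adj_SBL_zero h
    simp [Det1]
  | n + 1, x, y, h => by
    rw [show SBL (n+1) = ins (SBL n) from rfl, adj_ins] at h
    obtain ⟨a, b, hab, hc⟩ := h
    have hd := det1_adj n hab
    rcases hc with ⟨rfl, rfl⟩ | ⟨rfl, rfl⟩
    · exact det1_left hd
    · exact det1_right hd

lemma diff_eq {a b : ℚ} (h : Det1 a b) :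
    b - a = 1 / ((a.den : ℚ) * (b.den : ℚ)) := by
  have h' : ((b.num * (a.den:ℤ) - a.num * (b.den:ℤ) : ℤ) : ℚ) = 1 := by
    rw [h]; norm_num
  push_cast at h'
  rw [eq_div_iff (by positivity)]
  nlinarith [num_eq a, num_eq b]

lemma den_sum_ge : ∀ n, ∀ {x y : ℚ}, Adj x y (SBL n) → (n + 2 : ℕ) ≤ x.den + y.den
  | 0, x, y, h => by
    obtain ⟨rfl, rfl⟩ := adj_SBL_zero h
    simp
  | n + 1, x, y, h => by
    rw [show SBL (n+1) = ins (SBL n) from rfl, adj_ins] at h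
    obtain ⟨a, b, hab, hc⟩ := h
    have hd := det1_adj n hab
    have hsum := den_sum_ge n hab
    have hden : (mediant a b).den = a.den + b.den := by
      have := (mediant_num_den hd).2
      exact_mod_cast this
    have ha1 : 1 ≤ a.den := a.pos
    have hb1 : 1 ≤ b.den := b.pos
    rcases hc with ⟨rfl, rfl⟩ | ⟨rfl, rfl⟩ <;> rw [hden] <;> omega

lemma adj_gap {n : ℕ} {x y : ℚ} (h : Adj x y (SBL n)) :
    y - x ≤ 1 / (n + 1 : ℚ) := by
  have hd := det1_adj n h
  rw [diff_eq hd]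
  have hsum := den_sum_ge n h
  have ha1 : 1 ≤ x.den := x.pos
  have hb1 : 1 ≤ y.den := y.pos
  have hprod : (n + 1 : ℕ) ≤ x.den * y.den := by nlinarith
  have : ((n:ℚ) + 1) ≤ (x.den : ℚ) * y.den := by exact_mod_cast hprod
  apply one_div_le_one_div_of_le (by positivity) this

lemma mem_SBL_bounds : ∀ n, ∀ {z : ℚ}, z ∈ SBL n → 0 ≤ z ∧ z ≤ 1
  | 0, z, h => by
    rcases List.mem_cons.mp h with rfl | h
    · norm_num
    rcases List.mem_cons.mp h with rfl | h
    · norm_num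
    · cases h
  | n + 1, z, h => by
    rw [show SBL (n+1) = ins (SBL n) from rfl, mem_ins] at h
    rcases h with h | ⟨a, b, hab, rfl⟩
    · exact mem_SBL_bounds n h
    · have hab' : a < b := chain'_rel (sb_chain n) hab
      have h1 := mem_SBL_bounds n hab.mem_left
      have h2 := mem_SBL_bounds n hab.mem_right
      exact ⟨h1.1.trans (left_lt_mediant hab').le,
        (mediant_lt_right hab').le.trans h2.2⟩


section G

variable {lam : ℝ} {g : ℝ → ℝ}

lemma g_mediant
    (hrec : ∀ n : ℕ, ∀ x y : ℚ, IsConsecutive (sternBrocot n) x y →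
      g ((mediant x y : ℚ) : ℝ) = g (x : ℝ) + lam * (g (y : ℝ) - g (x : ℝ)))
    {n : ℕ} {a b : ℚ} (h : Adj a b (SBL n)) :
    g ((mediant a b : ℚ) : ℝ) = g (a : ℝ) + lam * (g (b : ℝ) - g (a : ℝ)) :=
  hrec n a b ((consec_iff n a b).mpr h)

lemma g_adj_pos (hlam : lam ∈ Set.Ioo (0:ℝ) 1)
    (hg0 : g 0 = 0) (hg1 : g 1 = 1)
    (hrec : ∀ n : ℕ, ∀ x y : ℚ, IsConsecutive (sternBrocot n) x y →
      g ((mediant x y : ℚ) : ℝ) = g (x : ℝ) + lam * (g (y : ℝ) - g (x : ℝ))) :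
    ∀ n : ℕ, ∀ {a b : ℚ}, Adj a b (SBL n) → 0 < g (b : ℝ) - g (a : ℝ)
  | 0, a, b, h => by
    obtain ⟨rfl, rfl⟩ := adj_SBL_zero h
    push_cast
    rw [hg0, hg1]; norm_num
  | n + 1, a, b, h => by
    rw [show SBL (n+1) = ins (SBL n) from rfl, adj_ins] at h
    obtain ⟨a', b', hab, hc⟩ := h
    have hpos := g_adj_pos hlam hg0 hg1 hrec n hab
    have hm := g_mediant hrec hab
    rcases hc with ⟨rfl, rfl⟩ | ⟨rfl, rfl⟩
    · rw [hm]; nlinarith [hlam.1, hlam.2]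
    · rw [hm]; nlinarith [hlam.1, hlam.2]

lemma g_mono_SBL (hlam : lam ∈ Set.Ioo (0:ℝ) 1)
    (hg0 : g 0 = 0) (hg1 : g 1 = 1)
    (hrec : ∀ n : ℕ, ∀ x y : ℚ, IsConsecutive (sternBrocot n) x y →
      g ((mediant x y : ℚ) : ℝ) = g (x : ℝ) + lam * (g (y : ℝ) - g (x : ℝ)))
    {n : ℕ} {x y : ℚ} (hx : x ∈ SBL n) (hy : y ∈ SBL n) (hxy : x ≤ y) :
    g (x : ℝ) ≤ g (y : ℝ) := by
  rcases eq_or_lt_of_le hxy with rfl | hlt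
  · exact le_refl _
  set R : ℚ → ℚ → Prop := fun a b => a < b ∧ g (a:ℝ) < g (b:ℝ) with hR
  haveI : IsTrans ℚ R := ⟨fun a b c h1 h2 => ⟨h1.1.trans h2.1, h1.2.trans h2.2⟩⟩
  have hchain : List.Chain' R (SBL n) := by
    apply chain'_of_adj
    intro a b h
    exact ⟨chain'_rel (sb_chain n) h, by linarith [g_adj_pos hlam hg0 hg1 hrec n h]⟩
  have hp := List.isChain_iff_pairwise.mp hchain
  rw [List.pairwise_iff_getElem] at hp
  obtain ⟨i, hi, hxi⟩ := List.mem_iff_getElem.mp hx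
  obtain ⟨j, hj, hyj⟩ := List.mem_iff_getElem.mp hy
  rcases lt_trichotomy i j with hij | rfl | hij
  · have := hp i j hi hj hij
    rw [hxi, hyj] at this
    exact this.2.le
  · rw [hxi] at hyj; rw [hyj] at hlt; exact absurd hlt (lt_irrefl _)
  · have := hp j i hj hi hij
    rw [hxi, hyj] at this
    exact absurd (hlt.trans this.1) (lt_irrefl _)

end G

lemma cover (t : ℝ) (h0 : 0 ≤ t) (h1 : t ≤ 1) :
    ∀ n, ∃ x y : ℚ, Adj x y (SBL n) ∧ (x:ℝ) ≤ t ∧ t ≤ (y:ℝ)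
  | 0 => ⟨0, 1, Adj.head _ _ _, by push_cast; exact h0, by push_cast; exact h1⟩
  | n + 1 => by
    obtain ⟨x, y, hadj, hx, hy⟩ := cover t h0 h1 n
    rcases le_total t ((mediant x y : ℚ) : ℝ) with hm | hm
    · exact ⟨x, mediant x y,
        (adj_ins (l := SBL n)).mpr ⟨x, y, hadj, Or.inl ⟨rfl, rfl⟩⟩, hx, hm⟩
    · exact ⟨mediant x y, y,
        (adj_ins (l := SBL n)).mpr ⟨x, y, hadj, Or.inr ⟨rfl, rfl⟩⟩, hm, hy⟩


lemma slope_tendsto {f : ℝ → ℝ} {c x : ℝ} (hf : HasDerivAt f c x)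
    {A B : ℕ → ℝ} (hA : ∀ n, A n ≤ x) (hB : ∀ n, x ≤ B n) (hAB : ∀ n, A n < B n)
    (hTA : Tendsto A atTop (𝓝 x)) (hTB : Tendsto B atTop (𝓝 x)) :
    Tendsto (fun n => (f (B n) - f (A n)) / (B n - A n)) atTop (𝓝 c) := by
  rw [Metric.tendsto_atTop]
  intro ε hε
  have hlo := (hasDerivAt_iff_isLittleO.mp hf).def (show (0:ℝ) < ε/4 by linarith)
  have hev : ∀ᶠ n in atTop,
      ‖f (A n) - f x - (A n - x) • c‖ ≤ ε/4 * ‖A n - x‖ ∧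
      ‖f (B n) - f x - (B n - x) • c‖ ≤ ε/4 * ‖B n - x‖ :=
    (hTA.eventually hlo).and (hTB.eventually hlo)
  rw [eventually_atTop] at hev
  obtain ⟨N, hN⟩ := hev
  refine ⟨N, fun n hn => ?_⟩
  obtain ⟨h1, h2⟩ := hN n hn
  have hBA : 0 < B n - A n := sub_pos.mpr (hAB n)
  simp only [smul_eq_mul, Real.norm_eq_abs] at h1 h2
  have hax : |A n - x| ≤ B n - A n := by
    rw [abs_of_nonpos (by linarith [hA n])]; linarith [hB n]
  have hbx : |B n - x| ≤ B n - A n := by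
    rw [abs_of_nonneg (by linarith [hB n])]; linarith [hA n]
  have hnum : |f (B n) - f (A n) - c * (B n - A n)| ≤ ε/2 * (B n - A n) := by
    have : f (B n) - f (A n) - c * (B n - A n)
        = (f (B n) - f x - (B n - x) * c) - (f (A n) - f x - (A n - x) * c) := by ring
    rw [this]
    calc |_ - _| ≤ |f (B n) - f x - (B n - x) * c| + |f (A n) - f x - (A n - x) * c| :=
          abs_sub _ _
      _ ≤ ε/4 * (B n - A n) + ε/4 * (B n - A n) := by
          refine add_le_add (h2.trans ?_) (h1.trans ?_) <;>
            [exact mul_le_mul_of_nonneg_left hbx (by linarith);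
             exact mul_le_mul_of_nonneg_left hax (by linarith)]
      _ = ε/2 * (B n - A n) := by ring
  have heq : (f (B n) - f (A n)) / (B n - A n) - c
      = (f (B n) - f (A n) - c * (B n - A n)) / (B n - A n) := by
    field_simp
  rw [Real.dist_eq, heq, abs_div, abs_of_pos hBA]
  calc |f (B n) - f (A n) - c * (B n - A n)| / (B n - A n)
      ≤ ε/2 * (B n - A n) / (B n - A n) := by
        apply div_le_div_of_nonneg_right hnum hBA.le
    _ = ε/2 := by field_simp
    _ < ε := by linarith

open scoped Classical in
noncomputable def seq (x : ℝ) : ℕ → ℚ × ℚ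
  | 0 => ((0 : ℚ), (1 : ℚ))
  | n + 1 =>
    if x < ((mediant (seq x n).1 (seq x n).2 : ℚ) : ℝ)
    then ((seq x n).1, mediant (seq x n).1 (seq x n).2)
    else (mediant (seq x n).1 (seq x n).2, (seq x n).2)

def dir (x : ℝ) (n : ℕ) : Prop := x < ((mediant (seq x n).1 (seq x n).2 : ℚ) : ℝ)

lemma seq_zero (x : ℝ) : seq x 0 = ((0:ℚ), (1:ℚ)) := by rw [seq]

lemma seq_pos {x : ℝ} {n : ℕ} (h : dir x n) :
    seq x (n + 1) = ((seq x n).1, mediant (seq x n).1 (seq x n).2) := by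
  unfold dir at h
  rw [seq, if_pos h]

lemma seq_neg {x : ℝ} {n : ℕ} (h : ¬ dir x n) :
    seq x (n + 1) = (mediant (seq x n).1 (seq x n).2, (seq x n).2) := by
  unfold dir at h
  rw [seq, if_neg h]

lemma seq_spec {x : ℝ} (hirr : Irrational x) (h0 : 0 < x) (h1 : x < 1) :
    ∀ n, Adj (seq x n).1 (seq x n).2 (SBL n) ∧
      ((seq x n).1 : ℝ) < x ∧ x < ((seq x n).2 : ℝ)
  | 0 => by
    rw [seq_zero]
    refine ⟨Adj.head _ _ _, ?_, ?_⟩ <;> push_cast <;> assumption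
  | n + 1 => by
    obtain ⟨hadj, hl, hr⟩ := seq_spec hirr h0 h1 n
    by_cases hd : dir x n
    · rw [seq_pos hd]
      exact ⟨(adj_ins (l := SBL n)).mpr ⟨_, _, hadj, Or.inl ⟨rfl, rfl⟩⟩, hl, hd⟩
    · have hge : ((mediant (seq x n).1 (seq x n).2 : ℚ) : ℝ) < x :=
        lt_of_le_of_ne (not_lt.mp hd) (Ne.symm (hirr.ne_rat _))
      rw [seq_neg hd]
      exact ⟨(adj_ins (l := SBL n)).mpr ⟨_, _, hadj, Or.inr ⟨rfl, rfl⟩⟩, hge, hr⟩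

def EvAlt (x : ℝ) : Prop := ∃ N : ℕ, ∀ n, N ≤ n → (dir x (n + 1) ↔ ¬ dir x n)


open scoped Classical in
lemma pointwise {lam : ℝ} {g : ℝ → ℝ} (hlam : lam ∈ Set.Ioo (0:ℝ) 1)
    (hg0 : g 0 = 0) (hg1 : g 1 = 1)
    (hrec : ∀ n : ℕ, ∀ x y : ℚ, IsConsecutive (sternBrocot n) x y →
      g ((mediant x y : ℚ) : ℝ) = g (x : ℝ) + lam * (g (y : ℝ) - g (x : ℝ)))
    {x : ℝ} (hirr : Irrational x) (h0 : 0 < x) (h1 : x < 1)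
    {c : ℝ} (hder : HasDerivAt g c x) (hna : ¬ EvAlt x) : c = 0 := by
  by_contra hc
  set a : ℕ → ℚ := fun n => (seq x n).1 with ha
  set b : ℕ → ℚ := fun n => (seq x n).2 with hb
  set A : ℕ → ℝ := fun n => ((a n : ℚ) : ℝ) with hA
  set B : ℕ → ℝ := fun n => ((b n : ℚ) : ℝ) with hB
  have hspec := seq_spec hirr h0 h1
  have hadj : ∀ n, Adj (a n) (b n) (SBL n) := fun n => (hspec n).1
  have haxb : ∀ n, A n < x ∧ x < B n := fun n => ⟨(hspec n).2.1, (hspec n).2.2⟩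
  have hdet : ∀ n, Det1 (a n) (b n) := fun n => det1_adj n (hadj n)
  have hu1 : ∀ n, (1:ℝ) ≤ ((a n).den : ℝ) := fun n => by exact_mod_cast (a n).pos
  have hv1 : ∀ n, (1:ℝ) ≤ ((b n).den : ℝ) := fun n => by exact_mod_cast (b n).pos
  have hΔ : ∀ n, B n - A n = 1 / (((a n).den : ℝ) * ((b n).den : ℝ)) := by
    intro n
    have h := diff_eq (hdet n)
    have h2 : B n - A n = ((b n - a n : ℚ) : ℝ) := by push_cast; ring
    rw [h2, h]
    push_cast
    ring
  have hΔpos : ∀ n, 0 < B n - A n := by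
    intro n
    have := chain'_rel (sb_chain n) (hadj n)
    simp only [hA, hB, sub_pos]
    exact_mod_cast this
  have hgap : ∀ n, B n - A n ≤ 1 / ((n:ℝ) + 1) := by
    intro n
    have h := adj_gap (hadj n)
    have : ((b n - a n : ℚ) : ℝ) ≤ ((1 / ((n:ℚ) + 1) : ℚ) : ℝ) := by exact_mod_cast h
    push_cast at this
    simpa [hA, hB] using this
  have htend : Tendsto (fun n : ℕ => 1 / ((n:ℝ) + 1)) atTop (𝓝 0) :=
    tendsto_one_div_add_atTop_nhds_zero_nat
  have hTB : Tendsto B atTop (𝓝 x) := by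
    apply tendsto_of_tendsto_of_tendsto_of_le_of_le
      (tendsto_const_nhds : Tendsto (fun _ : ℕ => x) atTop (𝓝 x))
      (by simpa using tendsto_const_nhds.add htend : Tendsto (fun n : ℕ => x + 1/((n:ℝ)+1)) atTop (𝓝 x))
    · exact fun n => (haxb n).2.le
    · intro n
      have := hgap n
      have := (haxb n).1
      linarith
  have hTA : Tendsto A atTop (𝓝 x) := by
    apply tendsto_of_tendsto_of_tendsto_of_le_of_le
      (by simpa using tendsto_const_nhds.sub htend : Tendsto (fun n : ℕ => x - 1/((n:ℝ)+1)) atTop (𝓝 x))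
      (tendsto_const_nhds : Tendsto (fun _ : ℕ => x) atTop (𝓝 x))
    · intro n
      have := hgap n
      have := (haxb n).2
      linarith
    · exact fun n => (haxb n).1.le
  have hG : ∀ n, 0 < g (B n) - g (A n) := fun n => g_adj_pos hlam hg0 hg1 hrec n (hadj n)
  have hmed : ∀ n, g ((mediant (a n) (b n) : ℚ) : ℝ) = g (A n) + lam * (g (B n) - g (A n)) :=
    fun n => g_mediant hrec (hadj n)
  have hstep_pos : ∀ n, dir x n → a (n+1) = a n ∧ b (n+1) = mediant (a n) (b n) := by
    intro n h
    constructor <;> simp [ha, hb, seq_pos h]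
  have hstep_neg : ∀ n, ¬ dir x n → a (n+1) = mediant (a n) (b n) ∧ b (n+1) = b n := by
    intro n h
    constructor <;> simp [ha, hb, seq_neg h]
  set fac : ℕ → ℝ := fun n => if dir x n then lam else 1 - lam with hfacdef
  have hfac : ∀ n, g (B (n+1)) - g (A (n+1)) = fac n * (g (B n) - g (A n)) := by
    intro n
    by_cases h : dir x n
    · obtain ⟨e1, e2⟩ := hstep_pos n h
      simp only [hfacdef, if_pos h, hA, hB, e1, e2]
      rw [hmed n]
      ring
    · obtain ⟨e1, e2⟩ := hstep_neg n h
      simp only [hfacdef, if_neg h, hA, hB, e1, e2]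
      rw [hmed n]
      ring
  have hden : ∀ n, ((mediant (a n) (b n)).den : ℝ) = ((a n).den : ℝ) + ((b n).den : ℝ) := by
    intro n
    have := (mediant_num_den (hdet n)).2
    exact_mod_cast this
  set ρ : ℕ → ℝ := fun n => (B (n+1) - A (n+1)) / (B n - A n) with hρdef
  have hρ_pos : ∀ n, dir x n →
      ρ n = ((b n).den : ℝ) / (((a n).den : ℝ) + ((b n).den : ℝ)) := by
    intro n h
    obtain ⟨e1, e2⟩ := hstep_pos n h
    have hu := hu1 n; have hv := hv1 n
    have hu0 : ((a n).den : ℝ) ≠ 0 := by linarith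
    have hv0 : ((b n).den : ℝ) ≠ 0 := by linarith
    simp only [hρdef, hΔ (n+1), hΔ n, e1, e2, hden n]
    field_simp
  have hρ_neg : ∀ n, ¬ dir x n →
      ρ n = ((a n).den : ℝ) / (((a n).den : ℝ) + ((b n).den : ℝ)) := by
    intro n h
    obtain ⟨e1, e2⟩ := hstep_neg n h
    have hu := hu1 n; have hv := hv1 n
    have hu0 : ((a n).den : ℝ) ≠ 0 := by linarith
    have hv0 : ((b n).den : ℝ) ≠ 0 := by linarith
    simp only [hρdef, hΔ (n+1), hΔ n, e1, e2, hden n]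
    field_simp
  have hid : ∀ n, (dir x n ↔ dir x (n+1)) → ρ (n+1) = 1 / (2 - ρ n) := by
    intro n hiff
    have hu := hu1 n; have hv := hv1 n
    by_cases h : dir x n
    · have h' := hiff.mp h
      obtain ⟨e1, e2⟩ := hstep_pos n h
      have hlt : ((b n).den : ℝ) / (((a n).den : ℝ) + ((b n).den : ℝ)) < 1 :=
        (div_lt_one (by linarith)).mpr (by linarith)
      have hne : (2:ℝ) - ((b n).den : ℝ) / (((a n).den : ℝ) + ((b n).den : ℝ)) ≠ 0 := by
        intro h0'; linarith
      rw [hρ_pos (n+1) h', hρ_pos n h, e1, e2, hden n, eq_div_iff hne]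
      field_simp
      ring
    · have h' := fun hd => h (hiff.mpr hd)
      obtain ⟨e1, e2⟩ := hstep_neg n h
      have hlt : ((a n).den : ℝ) / (((a n).den : ℝ) + ((b n).den : ℝ)) < 1 :=
        (div_lt_one (by linarith)).mpr (by linarith)
      have hne : (2:ℝ) - ((a n).den : ℝ) / (((a n).den : ℝ) + ((b n).den : ℝ)) ≠ 0 := by
        intro h0'; linarith
      rw [hρ_neg (n+1) h', hρ_neg n h, e1, e2, hden n, eq_div_iff hne]
      field_simp
      ring
  set s : ℕ → ℝ := fun n => (g (B n) - g (A n)) / (B n - A n) with hsdef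
  have hs : Tendsto s atTop (𝓝 c) :=
    slope_tendsto hder (fun n => (haxb n).1.le) (fun n => (haxb n).2.le)
      (fun n => by linarith [(haxb n).1, (haxb n).2]) hTA hTB
  have hs' : Tendsto (fun n => s (n+1)) atTop (𝓝 c) := by
    have := hs.comp (tendsto_add_atTop_nat 1)
    exact this
  have hratio : Tendsto (fun n => s (n+1) / s n) atTop (𝓝 1) := by
    have := hs'.div hs hc
    rwa [div_self hc] at this
  have hsr : ∀ n, s (n+1) / s n = fac n / ρ n := by
    intro n
    have hG0 : g (B n) - g (A n) ≠ 0 := (hG n).ne'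
    have hΔ0 : B n - A n ≠ 0 := (hΔpos n).ne'
    have hΔ'0 : B (n+1) - A (n+1) ≠ 0 := (hΔpos (n+1)).ne'
    simp only [hsdef, hρdef, hfac n]
    field_simp
  have hfr : Tendsto (fun n => fac n / ρ n) atTop (𝓝 1) := by
    apply hratio.congr
    intro n
    exact hsr n
  have hrf : Tendsto (fun n => ρ n / fac n) atTop (𝓝 1) := by
    have := hfr.inv₀ one_ne_zero
    simp only [inv_div, inv_one] at this
    exact this
  have main : ∀ μ : ℝ, 0 < μ → μ < 1 → ∀ φ : ℕ → ℕ, StrictMono φ →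
      (∀ k, fac (φ k) = μ ∧ fac (φ k + 1) = μ ∧ (dir x (φ k) ↔ dir x (φ k + 1))) →
      False := by
    intro μ hμ0 hμ1 φ hmono hk
    have hcomp1 : Tendsto (fun k => ρ (φ k) / fac (φ k)) atTop (𝓝 1) :=
      hrf.comp hmono.tendsto_atTop
    have hρφ : Tendsto (fun k => ρ (φ k)) atTop (𝓝 μ) := by
      have h' : Tendsto (fun k => ρ (φ k) / μ * μ) atTop (𝓝 (1 * μ)) := by
        apply Tendsto.mul_const
        apply hcomp1.congr
        intro k
        rw [(hk k).1]
      rw [one_mul] at h'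
      apply h'.congr
      intro k
      field_simp
    have hmono' : StrictMono (fun k => φ k + 1) := fun i j hij => by
      simpa using Nat.add_lt_add_right (hmono hij) 1
    have hcomp2 : Tendsto (fun k => ρ (φ k + 1) / fac (φ k + 1)) atTop (𝓝 1) :=
      hrf.comp hmono'.tendsto_atTop
    have hρφ' : Tendsto (fun k => ρ (φ k + 1)) atTop (𝓝 μ) := by
      have h' : Tendsto (fun k => ρ (φ k + 1) / μ * μ) atTop (𝓝 (1 * μ)) := by
        apply Tendsto.mul_const
        apply hcomp2.congr
        intro k
        rw [(hk k).2.1]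
      rw [one_mul] at h'
      apply h'.congr
      intro k
      field_simp
    have h2μ : (2:ℝ) - μ ≠ 0 := by intro h; nlinarith
    have hlim2 : Tendsto (fun k => 1 / (2 - ρ (φ k))) atTop (𝓝 (1 / (2 - μ))) := by
      apply Tendsto.div tendsto_const_nhds
      · exact tendsto_const_nhds.sub hρφ
      · exact h2μ
    have huniq : μ = 1 / (2 - μ) := by
      apply tendsto_nhds_unique _ hlim2
      apply hρφ'.congr
      intro k
      exact hid (φ k) (hk k).2.2
    rw [eq_div_iff h2μ] at huniq
    nlinarith [mul_pos (sub_pos.mpr hμ1) (sub_pos.mpr hμ1)]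
  unfold EvAlt at hna
  push_neg at hna
  have hfreq : ∃ᶠ n in atTop,
      ((dir x n ∧ dir x (n+1)) ∨ (¬ dir x n ∧ ¬ dir x (n+1))) := by
    rw [Filter.frequently_atTop]
    intro N
    obtain ⟨n, hn, hiff⟩ := hna N
    exact ⟨n, hn, by tauto⟩
  rcases Filter.frequently_or_distrib.mp hfreq with hF | hF <;>
    obtain ⟨φ, hφmono, hφP⟩ := Filter.extraction_of_frequently_atTop hF
  · exact main lam hlam.1 hlam.2 φ hφmono (fun k =>
      ⟨by simp [hfacdef, if_pos (hφP k).1], by simp [hfacdef, if_pos (hφP k).2],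
        by constructor <;> intro _ <;> [exact (hφP k).2; exact (hφP k).1]⟩)
  · exact main (1 - lam) (by linarith [hlam.2]) (by linarith [hlam.1]) φ hφmono (fun k =>
      ⟨by simp [hfacdef, if_neg (hφP k).1], by simp [hfacdef, if_neg (hφP k).2],
        by constructor <;> intro h <;> [exact absurd h (hφP k).1; exact absurd h (hφP k).2]⟩)


lemma seq_gap {x : ℝ} (hirr : Irrational x) (h0 : 0 < x) (h1 : x < 1) (n : ℕ) :
    ((seq x n).2 : ℝ) - ((seq x n).1 : ℝ) ≤ 1 / ((n:ℝ) + 1) := by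
  have h := adj_gap (seq_spec hirr h0 h1 n).1
  have h2 : (((seq x n).2 - (seq x n).1 : ℚ) : ℝ) ≤ ((1 / ((n:ℚ) + 1) : ℚ) : ℝ) := by
    exact_mod_cast h
  push_cast at h2
  linarith

open scoped Classical in
lemma countable_bad :
    Set.Countable {x : ℝ | Irrational x ∧ x ∈ Set.Ioo (0:ℝ) 1 ∧ EvAlt x} := by
  set E := {x : ℝ | Irrational x ∧ x ∈ Set.Ioo (0:ℝ) 1 ∧ EvAlt x} with hE
  set N : ℝ → ℕ := fun x => if h : EvAlt x then h.choose else 0 with hNdef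
  have hN : ∀ x : ℝ, EvAlt x → ∀ n, N x ≤ n → (dir x (n+1) ↔ ¬ dir x n) := by
    intro x h
    simp only [hNdef, dif_pos h]
    exact h.choose_spec
  set F : ℝ → ℕ × (ℚ × ℚ) × Bool :=
    fun x => (N x, seq x (N x), if dir x (N x) then true else false) with hF
  apply MapsTo.countable_of_injOn (Set.mapsTo_univ F E) _ Set.countable_univ
  intro x hx x' hx' hFeq
  obtain ⟨hirr, hxo, hAlt⟩ := hx
  obtain ⟨hirr', hxo', hAlt'⟩ := hx'
  have hN0 : N x = N x' := congrArg Prod.fst hFeq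
  have hseq0 : seq x (N x) = seq x' (N x') := congrArg (fun p => p.2.1) hFeq
  have hdir0 : dir x (N x) ↔ dir x' (N x') := by
    have := congrArg (fun p => p.2.2) hFeq
    simp only [hF] at this
    by_cases h1' : dir x (N x) <;> by_cases h2' : dir x' (N x') <;>
      simp [h1', h2'] at this ⊢
  set N0 := N x with hN0def
  have key : ∀ n, N0 ≤ n → seq x n = seq x' n ∧ (dir x n ↔ dir x' n) := by
    intro n hn
    induction n, hn using Nat.le_induction with
    | base => exact ⟨by rw [hseq0, hN0], by rw [hN0] at hdir0 ⊢; exact hdir0⟩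
    | succ n hn ih =>
      obtain ⟨hseq, hdir⟩ := ih
      have hd' : dir x (n+1) ↔ ¬ dir x n := hN x hAlt n hn
      have hd'' : dir x' (n+1) ↔ ¬ dir x' n := hN x' hAlt' n (by rw [← hN0]; exact hn)
      constructor
      · by_cases hdn : dir x n
        · rw [seq_pos hdn, seq_pos (hdir.mp hdn), hseq]
        · rw [seq_neg hdn, seq_neg (fun h => hdn (hdir.mpr h)), hseq]
      · rw [hd', hd'']
        tauto
  have hclose : ∀ n, N0 ≤ n → |x - x'| ≤ 1 / ((n:ℝ) + 1) := by
    intro n hn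
    have hsp := seq_spec hirr hxo.1 hxo.2 n
    have hsp' := seq_spec hirr' hxo'.1 hxo'.2 n
    rw [← (key n hn).1] at hsp'
    have hgap := seq_gap hirr hxo.1 hxo.2 n
    rw [abs_le]
    constructor <;> [linarith [hsp.2.1, hsp.2.2, hsp'.2.1, hsp'.2.2];
      linarith [hsp.2.1, hsp.2.2, hsp'.2.1, hsp'.2.2]]
  by_contra hne
  have hpos : 0 < |x - x'| := abs_pos.mpr (sub_ne_zero.mpr hne)
  obtain ⟨n, hn⟩ := exists_nat_one_div_lt hpos
  have hle : 1 / ((max n N0 : ℕ) + 1 : ℝ) ≤ 1 / ((n:ℝ) + 1) := by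
    apply one_div_le_one_div_of_le (by positivity)
    have : (n:ℝ) ≤ ((max n N0 : ℕ) : ℝ) := by exact_mod_cast Nat.le_max_left n N0
    linarith
  have := hclose (max n N0) (Nat.le_max_right n N0)
  linarith

lemma g_monotoneOn {lam : ℝ} {g : ℝ → ℝ} (hlam : lam ∈ Set.Ioo (0:ℝ) 1)
    (hg0 : g 0 = 0) (hg1 : g 1 = 1)
    (hgc : ContinuousOn g (Set.Icc (0 : ℝ) 1))
    (hrec : ∀ n : ℕ, ∀ x y : ℚ, IsConsecutive (sternBrocot n) x y →
      g ((mediant x y : ℚ) : ℝ) = g (x : ℝ) + lam * (g (y : ℝ) - g (x : ℝ))) :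
    MonotoneOn g (Set.Icc (0:ℝ) 1) := by
  intro p hp q hq hpq
  rcases eq_or_lt_of_le hpq with rfl | hlt
  · exact le_refl _
  have hcov1 := fun n => cover p hp.1 hp.2 n
  have hcov2 := fun n => cover q hq.1 hq.2 n
  choose u v huv hup hpv using hcov1
  choose u' v' huv' huq hqv using hcov2
  have htend : Tendsto (fun n : ℕ => 1 / ((n:ℝ) + 1)) atTop (𝓝 0) :=
    tendsto_one_div_add_atTop_nhds_zero_nat
  have hgapv : ∀ n, ((v n : ℚ) : ℝ) - ((u n : ℚ) : ℝ) ≤ 1 / ((n:ℝ) + 1) := by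
    intro n
    have h := adj_gap (huv n)
    have h2 : ((v n - u n : ℚ) : ℝ) ≤ ((1 / ((n:ℚ) + 1) : ℚ) : ℝ) := by exact_mod_cast h
    push_cast at h2; linarith
  have hgapu' : ∀ n, ((v' n : ℚ) : ℝ) - ((u' n : ℚ) : ℝ) ≤ 1 / ((n:ℝ) + 1) := by
    intro n
    have h := adj_gap (huv' n)
    have h2 : ((v' n - u' n : ℚ) : ℝ) ≤ ((1 / ((n:ℚ) + 1) : ℚ) : ℝ) := by exact_mod_cast h
    push_cast at h2; linarith
  have hmemIcc : ∀ n (z : ℚ), z ∈ SBL n → ((z:ℚ):ℝ) ∈ Set.Icc (0:ℝ) 1 := by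
    intro n z hz
    obtain ⟨hz1, hz2⟩ := mem_SBL_bounds n hz
    constructor <;> [exact_mod_cast hz1; exact_mod_cast hz2]
  have hTv : Tendsto (fun n => ((v n : ℚ) : ℝ)) atTop (𝓝[Set.Icc (0:ℝ) 1] p) := by
    rw [tendsto_nhdsWithin_iff]
    constructor
    · apply tendsto_of_tendsto_of_tendsto_of_le_of_le
        (tendsto_const_nhds : Tendsto (fun _ : ℕ => p) atTop (𝓝 p))
        (by simpa using tendsto_const_nhds.add htend :
          Tendsto (fun n : ℕ => p + 1/((n:ℝ)+1)) atTop (𝓝 p))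
      · exact fun n => hpv n
      · intro n; have := hgapv n; have := hup n; linarith
    · exact Filter.Eventually.of_forall fun n => hmemIcc n (v n) (huv n).mem_right
  have hTu' : Tendsto (fun n => ((u' n : ℚ) : ℝ)) atTop (𝓝[Set.Icc (0:ℝ) 1] q) := by
    rw [tendsto_nhdsWithin_iff]
    constructor
    · apply tendsto_of_tendsto_of_tendsto_of_le_of_le
        (by simpa using tendsto_const_nhds.sub htend :
          Tendsto (fun n : ℕ => q - 1/((n:ℝ)+1)) atTop (𝓝 q))
        (tendsto_const_nhds : Tendsto (fun _ : ℕ => q) atTop (𝓝 q))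
      · intro n; have := hgapu' n; have := hqv n; linarith
      · exact fun n => huq n
    · exact Filter.Eventually.of_forall fun n => hmemIcc n (u' n) (huv' n).mem_left
  have hgv : Tendsto (fun n => g ((v n : ℚ) : ℝ)) atTop (𝓝 (g p)) :=
    (hgc p hp).tendsto.comp hTv
  have hgu' : Tendsto (fun n => g ((u' n : ℚ) : ℝ)) atTop (𝓝 (g q)) :=
    (hgc q hq).tendsto.comp hTu'
  have hevle : ∀ᶠ n in atTop, g ((v n : ℚ) : ℝ) ≤ g ((u' n : ℚ) : ℝ) := by
    have hsmall : ∀ᶠ n : ℕ in atTop, 1 / ((n:ℝ) + 1) < (q - p) / 2 :=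
      Filter.Tendsto.eventually_lt_const (by linarith : (0:ℝ) < (q - p)/2) htend
    filter_upwards [hsmall] with n hsm
    have hlt' : ((v n : ℚ) : ℝ) < ((u' n : ℚ) : ℝ) := by
      have := hgapv n; have := hgapu' n
      have := hpv n; have := hup n; have := huq n; have := hqv n
      linarith
    have hleq : v n ≤ u' n := by exact_mod_cast hlt'.le
    exact g_mono_SBL hlam hg0 hg1 hrec (huv n).mem_right (huv' n).mem_left hleq
  exact le_of_tendsto_of_tendsto hgv hgu' hevle

end TU

/-- `g_λ` is singular: almost everywhere on `[0,1]` it is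
differentiable with derivative zero. -/
theorem tichyUitz_deriv_zero_ae
    (lam : ℝ) (hlam : lam ∈ Set.Ioo (0 : ℝ) 1)
    (g : ℝ → ℝ)
    (hg0 : g 0 = 0) (hg1 : g 1 = 1)
    (hgc : ContinuousOn g (Set.Icc (0 : ℝ) 1))
    (hrec : ∀ n : ℕ, ∀ x y : ℚ, IsConsecutive (sternBrocot n) x y →
      g ((mediant x y : ℚ) : ℝ) = g (x : ℝ) + lam * (g (y : ℝ) - g (x : ℝ))) :
    ∀ᵐ x ∂(MeasureTheory.volume : MeasureTheory.Measure ℝ),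
      x ∈ Set.Icc (0 : ℝ) 1 → HasDerivAt g 0 x := by
  have hmono := TU.g_monotoneOn hlam hg0 hg1 hgc hrec
  set G : ℝ → ℝ := fun t => g (min 1 (max 0 t)) with hGdef
  have hclampmem : ∀ t : ℝ, min 1 (max 0 t) ∈ Set.Icc (0:ℝ) 1 := fun t =>
    ⟨le_min zero_le_one (le_max_left _ _), min_le_left _ _⟩
  have hGmono : Monotone G := by
    intro s t hst
    exact hmono (hclampmem s) (hclampmem t)
      (min_le_min (le_refl _) (max_le_max (le_refl _) hst))
  have hae1 := hGmono.ae_differentiableAt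
  have hratQ : Set.Countable (Set.range ((↑) : ℚ → ℝ)) := Set.countable_range _
  have hae2 : ∀ᵐ x ∂(MeasureTheory.volume : MeasureTheory.Measure ℝ),
      x ∉ Set.range ((↑) : ℚ → ℝ) :=
    MeasureTheory.measure_eq_zero_iff_ae_notMem.mp (hratQ.measure_zero _)
  have hae3 : ∀ᵐ x ∂(MeasureTheory.volume : MeasureTheory.Measure ℝ),
      x ∉ {x : ℝ | Irrational x ∧ x ∈ Set.Ioo (0:ℝ) 1 ∧ TU.EvAlt x} :=
    MeasureTheory.measure_eq_zero_iff_ae_notMem.mp (TU.countable_bad.measure_zero _)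
  filter_upwards [hae1, hae2, hae3] with x hdiff hnrat hnbad hxIcc
  have hxirr : Irrational x := hnrat
  have hx0 : x ≠ 0 := by
    intro h; exact hnrat ⟨0, by rw [h]; norm_num⟩
  have hx1 : x ≠ 1 := by
    intro h; exact hnrat ⟨1, by rw [h]; norm_num⟩
  have hxo : x ∈ Set.Ioo (0:ℝ) 1 :=
    ⟨lt_of_le_of_ne hxIcc.1 (Ne.symm hx0), lt_of_le_of_ne hxIcc.2 hx1⟩
  have heq : g =ᶠ[nhds x] G := by
    filter_upwards [Ioo_mem_nhds hxo.1 hxo.2] with t ht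
    have h1' : max 0 t = t := max_eq_right ht.1.le
    have h2' : min 1 t = t := min_eq_right ht.2.le
    simp only [hGdef, h1', h2']
  have hder : HasDerivAt g (deriv G x) x :=
    (hdiff.hasDerivAt).congr_of_eventuallyEq heq
  have hEv : ¬ TU.EvAlt x := fun h => hnbad ⟨hxirr, hxo, h⟩
  have hc0 := TU.pointwise hlam hg0 hg1 hrec hxirr hxo.1 hxo.2 hder hEv
  rwa [hc0] at hder
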